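/- Let C, D, θ be real constants with C ≠ 0 and D < 0, and set ε = √(−8D). A triple (T, l, σ) of smooth functions ℝ → ℝ belongs to Sol(C,D,θ) if and only if l = 0 and there exist real constants C₁, C₂, C₃, C₄ such that for all t ∈ ℝ: T(t) = (C₁/ε)·sin(εt) − (C₂/ε)·cos(εt) + C₃ and σ(t) = (θ²C₁/4)·cos(εt) + (θ²C₂/4)·sin(εt) + C₄. -/

import Mathlib

open Real

private lemma one_le_inf' : ((⊤ : ℕ∞) : WithTop ℕ∞) ≠ 0 :=
  ne_of_gt (lt_of_lt_of_le zero_lt_one (by exact_mod_cast le_top))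

private lemma deriv_fun_add' {f g : ℝ → ℝ} (hf : Differentiable ℝ f)
    (hg : Differentiable ℝ g) : deriv (f + g) = deriv f + deriv g :=
  funext fun t => deriv_add (hf t) (hg t)

private lemma deriv_fun_smul' (c : ℝ) {f : ℝ → ℝ} (hf : Differentiable ℝ f) :
    deriv (c • f) = c • deriv f :=
  funext fun t => deriv_const_smul c (hf t)

private lemma smooth_deriv' {f : ℝ → ℝ} (hf : ContDiff ℝ (⊤ : ℕ∞) f) :
    ContDiff ℝ (⊤ : ℕ∞) (deriv f) :=
  (contDiff_infty_iff_deriv.mp hf).2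

/-- The space of triples `(T, l, σ)` of smooth functions satisfying the isovector
system `C·l = 0`, `l″ = 2D·l`, `σ′ = (θ²/4)·T″`, `T‴ = 8D·T′`. -/
def Sol (C D θ : ℝ) : Submodule ℝ ((ℝ → ℝ) × (ℝ → ℝ) × (ℝ → ℝ)) where
  carrier := {p | ContDiff ℝ (⊤ : ℕ∞) p.1 ∧ ContDiff ℝ (⊤ : ℕ∞) p.2.1 ∧
    ContDiff ℝ (⊤ : ℕ∞) p.2.2 ∧
    (∀ t, C * p.2.1 t = 0) ∧
    (∀ t, deriv (deriv p.2.1) t = 2 * D * p.2.1 t) ∧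
    (∀ t, deriv p.2.2 t = θ ^ 2 / 4 * deriv (deriv p.1) t) ∧
    (∀ t, deriv (deriv (deriv p.1)) t = 8 * D * deriv p.1 t)}
  zero_mem' := by
    have h0 : deriv (0 : ℝ → ℝ) = 0 := funext fun x => deriv_const x 0
    refine ⟨contDiff_const, contDiff_const, contDiff_const, ?_, ?_, ?_, ?_⟩ <;>
      intro t <;> simp [h0]
  add_mem' := by
    rintro ⟨T₁, l₁, σ₁⟩ ⟨T₂, l₂, σ₂⟩ ⟨hT₁, hl₁, hσ₁, e₁, e₂, e₃, e₄⟩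
      ⟨hT₂, hl₂, hσ₂, f₁, f₂, f₃, f₄⟩
    have dT₁ : Differentiable ℝ T₁ := hT₁.differentiable one_le_inf'
    have dT₂ : Differentiable ℝ T₂ := hT₂.differentiable one_le_inf'
    have dl₁ : Differentiable ℝ l₁ := hl₁.differentiable one_le_inf'
    have dl₂ : Differentiable ℝ l₂ := hl₂.differentiable one_le_inf'
    have dσ₁ : Differentiable ℝ σ₁ := hσ₁.differentiable one_le_inf'
    have dσ₂ : Differentiable ℝ σ₂ := hσ₂.differentiable one_le_inf'
    have ddl₁ : Differentiable ℝ (deriv l₁) := (smooth_deriv' hl₁).differentiable one_le_inf'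
    have ddl₂ : Differentiable ℝ (deriv l₂) := (smooth_deriv' hl₂).differentiable one_le_inf'
    have ddT₁ : Differentiable ℝ (deriv T₁) := (smooth_deriv' hT₁).differentiable one_le_inf'
    have ddT₂ : Differentiable ℝ (deriv T₂) := (smooth_deriv' hT₂).differentiable one_le_inf'
    have dddT₁ : Differentiable ℝ (deriv (deriv T₁)) :=
      (smooth_deriv' (smooth_deriv' hT₁)).differentiable one_le_inf'
    have dddT₂ : Differentiable ℝ (deriv (deriv T₂)) :=
      (smooth_deriv' (smooth_deriv' hT₂)).differentiable one_le_inf'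
    have hl : deriv (deriv (l₁ + l₂)) = deriv (deriv l₁) + deriv (deriv l₂) := by
      rw [deriv_fun_add' dl₁ dl₂, deriv_fun_add' ddl₁ ddl₂]
    have hT2 : deriv (deriv (T₁ + T₂)) = deriv (deriv T₁) + deriv (deriv T₂) := by
      rw [deriv_fun_add' dT₁ dT₂, deriv_fun_add' ddT₁ ddT₂]
    have hT3 : deriv (deriv (deriv (T₁ + T₂)))
        = deriv (deriv (deriv T₁)) + deriv (deriv (deriv T₂)) := by
      rw [hT2, deriv_fun_add' dddT₁ dddT₂]
    refine ⟨hT₁.add hT₂, hl₁.add hl₂, hσ₁.add hσ₂, ?_, ?_, ?_, ?_⟩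
    · intro t
      simp only [Prod.mk_add_mk, Pi.add_apply, mul_add, e₁ t, f₁ t, add_zero]
    · intro t
      simp only [Prod.mk_add_mk]
      rw [hl]
      simp only [Pi.add_apply, e₂ t, f₂ t]; ring
    · intro t
      simp only [Prod.mk_add_mk]
      rw [hT2, deriv_fun_add' dσ₁ dσ₂]
      simp only [Pi.add_apply, e₃ t, f₃ t]; ring
    · intro t
      simp only [Prod.mk_add_mk]
      rw [hT3, deriv_fun_add' dT₁ dT₂]
      simp only [Pi.add_apply, e₄ t, f₄ t]; ring
  smul_mem' := by
    rintro c ⟨T, l, σ⟩ ⟨hT, hl, hσ, e₁, e₂, e₃, e₄⟩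
    have dT : Differentiable ℝ T := hT.differentiable one_le_inf'
    have dl : Differentiable ℝ l := hl.differentiable one_le_inf'
    have dσ : Differentiable ℝ σ := hσ.differentiable one_le_inf'
    have ddl : Differentiable ℝ (deriv l) := (smooth_deriv' hl).differentiable one_le_inf'
    have ddT : Differentiable ℝ (deriv T) := (smooth_deriv' hT).differentiable one_le_inf'
    have dddT : Differentiable ℝ (deriv (deriv T)) :=
      (smooth_deriv' (smooth_deriv' hT)).differentiable one_le_inf'
    have hl2 : deriv (deriv (c • l)) = c • deriv (deriv l) := by
      rw [deriv_fun_smul' c dl, deriv_fun_smul' c ddl]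
    have hT2 : deriv (deriv (c • T)) = c • deriv (deriv T) := by
      rw [deriv_fun_smul' c dT, deriv_fun_smul' c ddT]
    have hT3 : deriv (deriv (deriv (c • T))) = c • deriv (deriv (deriv T)) := by
      rw [hT2, deriv_fun_smul' c dddT]
    refine ⟨hT.const_smul c, hl.const_smul c, hσ.const_smul c, ?_, ?_, ?_, ?_⟩
    · intro t
      simp only [Prod.smul_mk, Pi.smul_apply, smul_eq_mul]
      rw [mul_comm c (l t), ← mul_assoc, e₁ t, zero_mul]
    · intro t
      simp only [Prod.smul_mk]
      rw [hl2]
      simp only [Pi.smul_apply, smul_eq_mul, e₂ t]; ring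
    · intro t
      simp only [Prod.smul_mk]
      rw [hT2, deriv_fun_smul' c dσ]
      simp only [Pi.smul_apply, smul_eq_mul, e₃ t]; ring
    · intro t
      simp only [Prod.smul_mk]
      rw [hT3, deriv_fun_smul' c dT]
      simp only [Pi.smul_apply, smul_eq_mul, e₄ t]; ring


private noncomputable def trig (a b c ε : ℝ) : ℝ → ℝ :=
  fun t => a * Real.sin (ε * t) + b * Real.cos (ε * t) + c

private lemma hasDerivAt_trig (a b c ε t : ℝ) :
    HasDerivAt (trig a b c ε) (trig (-(b * ε)) (a * ε) 0 ε t) t := by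
  have h1 : HasDerivAt (fun t => a * Real.sin (ε * t)) (a * (Real.cos (ε * t) * (ε * 1))) t :=
    ((Real.hasDerivAt_sin (ε * t)).comp t ((hasDerivAt_id t).const_mul ε)).const_mul a
  have h2 : HasDerivAt (fun t => b * Real.cos (ε * t)) (b * (-Real.sin (ε * t) * (ε * 1))) t :=
    ((Real.hasDerivAt_cos (ε * t)).comp t ((hasDerivAt_id t).const_mul ε)).const_mul b
  have h3 := (h1.add h2).add_const c
  refine HasDerivAt.congr_deriv (f := trig a b c ε) h3 ?_
  simp [trig]; ring

private lemma deriv_trig (a b c ε : ℝ) :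
    deriv (trig a b c ε) = trig (-(b * ε)) (a * ε) 0 ε :=
  funext fun t => (hasDerivAt_trig a b c ε t).deriv

private lemma differentiable_trig (a b c ε : ℝ) : Differentiable ℝ (trig a b c ε) :=
  fun t => (hasDerivAt_trig a b c ε t).differentiableAt

private lemma eq_of_deriv_eq' {f g : ℝ → ℝ} (hf : Differentiable ℝ f) (hg : Differentiable ℝ g)
    (h0 : f 0 = g 0) (h : ∀ t, deriv f t = deriv g t) : ∀ t, f t = g t := by
  intro t
  have hd : ∀ s, deriv (f - g) s = 0 := by
    intro s
    simp only [Pi.sub_def]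
    rw [deriv_fun_sub (hf s) (hg s), h s, sub_self]
  have hc := is_const_of_deriv_eq_zero (hf.sub hg) hd t 0
  simp only [Pi.sub_apply] at hc
  linarith [hc, h0]

private lemma harmonic' {ε : ℝ} (hε : ε ≠ 0) (f : ℝ → ℝ) (hf : ContDiff ℝ (⊤ : ℕ∞) f)
    (hode : ∀ t, deriv (deriv f) t = -ε ^ 2 * f t) :
    ∀ t, f t = trig (deriv f 0 / ε) (f 0) 0 ε t := by
  set a := deriv f 0 / ε with ha
  set b := f 0 with hb
  set g : ℝ → ℝ := fun t => f t - trig a b 0 ε t with hgdef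
  have hdf : Differentiable ℝ f := hf.differentiable one_le_inf'
  have hdf' : Differentiable ℝ (deriv f) := (smooth_deriv' hf).differentiable one_le_inf'
  have hdg : Differentiable ℝ g := hdf.sub (differentiable_trig a b 0 ε)
  have hg1 : deriv g = fun t => deriv f t - trig (-(b * ε)) (a * ε) 0 ε t := by
    funext t
    rw [hgdef]
    rw [deriv_fun_sub (hdf t) (differentiable_trig a b 0 ε t), deriv_trig]
  have hdg' : Differentiable ℝ (deriv g) := by
    rw [hg1]; exact hdf'.sub (differentiable_trig _ _ 0 ε)
  have hg2 : ∀ t, deriv (deriv g) t = -ε ^ 2 * g t := by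
    intro t
    rw [hg1, deriv_fun_sub (hdf' t) (differentiable_trig _ _ 0 ε t), deriv_trig, hode t]
    simp only [hgdef, trig]; ring
  set E : ℝ → ℝ := fun t => (deriv g t) ^ 2 + ε ^ 2 * (g t) ^ 2 with hE
  have hEd : ∀ t, HasDerivAt E 0 t := by
    intro t
    have h1 := ((hdg' t).hasDerivAt).pow 2
    have h2 := (((hdg t).hasDerivAt).pow 2).const_mul (ε ^ 2)
    have h3 := h1.add h2
    refine HasDerivAt.congr_deriv (f := E) h3 ?_
    rw [hg2 t]; push_cast; ring
  have hEc : ∀ t, E t = E 0 :=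
    fun t => is_const_of_deriv_eq_zero (fun s => (hEd s).differentiableAt)
      (fun s => (hEd s).deriv) t 0
  have hg0 : g 0 = 0 := by simp [hgdef, trig, hb]
  have hg'0 : deriv g 0 = 0 := by
    rw [hg1]
    simp only [trig, mul_zero, Real.sin_zero, Real.cos_zero, ha]
    field_simp
    ring
  have hE0 : E 0 = 0 := by rw [hE]; simp [hg0, hg'0]
  intro t
  have ht0 := hEc t
  rw [hE0] at ht0
  have ht : deriv g t ^ 2 + ε ^ 2 * g t ^ 2 = 0 := ht0
  have hε2 : (0 : ℝ) < ε ^ 2 := by positivity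
  have hgt : g t = 0 := by
    have h1 : ε ^ 2 * (g t) ^ 2 = 0 := by
      nlinarith [sq_nonneg (deriv g t), mul_nonneg hε2.le (sq_nonneg (g t))]
    have h2 : (g t) ^ 2 = 0 := by
      rcases mul_eq_zero.mp h1 with h | h
      · exact absurd h hε2.ne'
      · exact h
    exact pow_eq_zero_iff two_ne_zero |>.mp h2
  have hgt2 : f t - trig a b 0 ε t = 0 := hgt
  linarith [hgt2]


/-- For `C ≠ 0` and `D < 0`, with `ε = √(−8D)`, a triple `(T, l, σ)` of smooth functions
belongs to `Sol C D θ` iff `l = 0` and `T`, `σ` have the stated trigonometric form. -/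
theorem mem_Sol_iff_of_neg (C D θ ε : ℝ) (hC : C ≠ 0) (hD : D < 0)
    (hε : ε = Real.sqrt (-(8 * D))) (T l σ : ℝ → ℝ)
    (hT : ContDiff ℝ (⊤ : ℕ∞) T) (hl : ContDiff ℝ (⊤ : ℕ∞) l)
    (hσ : ContDiff ℝ (⊤ : ℕ∞) σ) :
    (T, l, σ) ∈ Sol C D θ ↔
      l = 0 ∧ ∃ C₁ C₂ C₃ C₄ : ℝ,
        (∀ t, T t = C₁ / ε * Real.sin (ε * t) - C₂ / ε * Real.cos (ε * t) + C₃) ∧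
        (∀ t, σ t = θ ^ 2 * C₁ / 4 * Real.cos (ε * t)
          + θ ^ 2 * C₂ / 4 * Real.sin (ε * t) + C₄) := by
  have hεpos : 0 < ε := by
    rw [hε]; exact Real.sqrt_pos.mpr (by linarith)
  have hε0 : ε ≠ 0 := hεpos.ne'
  have hε2 : ε ^ 2 = -(8 * D) := by
    rw [hε]; exact Real.sq_sqrt (by linarith)
  have h8D : 8 * D = -ε ^ 2 := by rw [hε2]; ring
  constructor
  · rintro ⟨-, -, -, h1, h2, h3, h4⟩
    have hl0 : l = 0 := by
      funext t
      have := h1 t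
      rcases mul_eq_zero.mp this with h | h
      · exact absurd h hC
      · exact h
    refine ⟨hl0, deriv T 0, deriv (deriv T) 0 / ε, T 0 + (deriv (deriv T) 0 / ε) / ε,
      σ 0 - θ ^ 2 * (deriv T 0) / 4, ?_, ?_⟩
    all_goals
      set C₁ := deriv T 0 with hC₁
      set C₂ := deriv (deriv T) 0 / ε with hC₂
      have hfode : ∀ t, deriv (deriv (deriv T)) t = -ε ^ 2 * deriv T t := by
        intro t; rw [h4 t, h8D]
      have hfeq := harmonic' hε0 (deriv T) (smooth_deriv' hT) hfode
      have hdT : Differentiable ℝ T := hT.differentiable one_le_inf'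
      have hdT' : Differentiable ℝ (deriv T) := (smooth_deriv' hT).differentiable one_le_inf'
      have hdσ : Differentiable ℝ σ := hσ.differentiable one_le_inf'
    · -- T formula
      have hTeq : ∀ t, T t = trig (C₁ / ε) (-(C₂ / ε)) (T 0 + C₂ / ε) ε t := by
        refine eq_of_deriv_eq' hdT (differentiable_trig _ _ _ ε) ?_ ?_
        · simp [trig]
        · intro t
          have hc : ∀ x : ℝ, x / ε * ε = x := fun x => div_mul_cancel₀ x hε0
          rw [deriv_trig, hfeq t]
          simp only [trig, neg_mul, neg_neg, hc]
          rfl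
      intro t
      rw [hTeq t]
      simp only [trig]
      ring
    · -- σ formula
      have hdT2 : deriv (deriv T) = trig (-(C₁ * ε)) (C₂ * ε) 0 ε := by
        rw [funext hfeq, deriv_trig]
      have hσeq : ∀ t, σ t = trig (θ ^ 2 * C₂ / 4) (θ ^ 2 * C₁ / 4)
          (σ 0 - θ ^ 2 * C₁ / 4) ε t := by
        refine eq_of_deriv_eq' hdσ (differentiable_trig _ _ _ ε) ?_ ?_
        · simp [trig]
        · intro t
          rw [deriv_trig, h3 t, hdT2]
          simp only [trig]
          ring
      intro t
      rw [hσeq t]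
      simp only [trig]
      ring
  · rintro ⟨hl0, C₁, C₂, C₃, C₄, hTf, hσf⟩
    have hTfun : T = trig (C₁ / ε) (-(C₂ / ε)) C₃ ε := by
      funext t; rw [hTf t]; simp only [trig]; ring
    have hσfun : σ = trig (θ ^ 2 * C₂ / 4) (θ ^ 2 * C₁ / 4) C₄ ε := by
      funext t; rw [hσf t]; simp only [trig]; ring
    have hd0 : deriv (0 : ℝ → ℝ) = 0 := funext fun x => deriv_const x 0
    refine ⟨hT, hl, hσ, ?_, ?_, ?_, ?_⟩
    · intro t; rw [hl0]; simp
    · intro t; rw [hl0]; simp [hd0]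
    · intro t
      have hc : ∀ x : ℝ, x / ε * ε = x := fun x => div_mul_cancel₀ x hε0
      rw [hσfun, hTfun, deriv_trig, deriv_trig, deriv_trig]
      simp only [trig, neg_mul, neg_neg, hc]
      ring
    · intro t
      have hc : ∀ x : ℝ, x / ε * ε = x := fun x => div_mul_cancel₀ x hε0
      rw [hTfun, deriv_trig, deriv_trig, deriv_trig, h8D]
      simp only [trig, neg_mul, neg_neg, hc]
      ring
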